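/- For every k ≥ 2, as an identity of formal power series in ℚ[[x]]: 1 + ∑_{n≥1} t(n,k,1) x^n / n! = 1 + log( 1 + ∑_{n≥1} t(n,k-1,1) x^n / n! ), where log denotes the formal logarithm applied to a power series with constant term 1. -/

import Mathlib

open Finset

/-- Stirling numbers of the second kind: the number of partitions (equivalence
relations) of an `n`-element set into `r` nonempty blocks. -/
noncomputable def stirS2 (n r : ℕ) : ℕ :=
  Nat.card {p : Setoid (Fin n) // Nat.card (Quotient p) = r}

/-- Signed Stirling numbers of the first kind, defined by
`x(x-1)⋯(x-n+1) = ∑_{r=0}^{n} s(n,r) xʳ`. -/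
noncomputable def stirS1 (n r : ℕ) : ℤ :=
  (∏ i ∈ Finset.range n, (Polynomial.X - Polynomial.C (i : ℤ))).coeff r

/-- `Tnum n k r = T(n,k,r) = ∑_{n ≥ i_1 ≥ … ≥ i_{k-1} ≥ r} ∏_{j=1}^{k} S(i_{j-1}, i_j)`
(with `i_0 = n`, `i_k = r`), written via the equivalent recursion on `k`. -/
noncomputable def Tnum : ℕ → ℕ → ℕ → ℕ
  | n, 0, r => if n = r then 1 else 0
  | n, k + 1, r => ∑ m ∈ Finset.Icc r n, stirS2 n m * Tnum m k r

/-- `tnum n k r = t(n,k,r) = ∑_{n ≥ i_1 ≥ … ≥ i_{k-1} ≥ r} ∏_{j=1}^{k} s(i_{j-1}, i_j)`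
(with `i_0 = n`, `i_k = r`), written via the equivalent recursion on `k`. -/
noncomputable def tnum : ℕ → ℕ → ℕ → ℤ
  | n, 0, r => if n = r then 1 else 0
  | n, k + 1, r => ∑ m ∈ Finset.Icc r n, stirS1 n m * tnum m k r

/-- Composition `f(g(x))` of formal power series, for `g` with zero constant
term (so that `coeff d (g^m) = 0` for `m > d` and the sum below is the full
composition). -/
noncomputable def comp1 (f g : PowerSeries ℚ) : PowerSeries ℚ :=
  PowerSeries.mk fun d => ∑ m ∈ Finset.range (d + 1),
    PowerSeries.coeff m f * PowerSeries.coeff d (g ^ m)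

/-- The Maclaurin series of `log(1+u) = ∑_{m ≥ 1} (-1)^{m+1} uᵐ/m`. -/
noncomputable def logOnePlus : PowerSeries ℚ :=
  PowerSeries.mk fun m => if m = 0 then 0 else (-1 : ℚ) ^ (m + 1) / m

/-- The formal logarithm of a power series `f` with constant term `1`:
`log f = log(1 + (f - 1))`. -/
noncomputable def logOf (f : PowerSeries ℚ) : PowerSeries ℚ :=
  comp1 logOnePlus (f - 1)

/-- The series `1 + ∑_{n ≥ 1} t(n,k,1) xⁿ/n! ∈ ℚ[[x]]`. -/
noncomputable def tOneGen (k : ℕ) : PowerSeries ℚ :=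
  PowerSeries.mk fun n => if n = 0 then 1 else (tnum n k 1 : ℚ) / n.factorial


section
open PowerSeries

/-! ### Basic facts about `comp1` and powers of series with zero constant term -/

lemma coeff_pow_zero {g : PowerSeries ℚ} (hg : PowerSeries.constantCoeff g = 0)
    {d m : ℕ} (h : d < m) : PowerSeries.coeff d (g ^ m) = 0 := by
  have : (PowerSeries.X : ℚ⟦X⟧) ^ m ∣ g ^ m :=
    pow_dvd_pow_of_dvd (PowerSeries.X_dvd_iff.mpr hg) m
  exact PowerSeries.X_pow_dvd_iff.mp this d h

lemma coeff_comp1 (f g : PowerSeries ℚ) (d : ℕ) :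
    PowerSeries.coeff d (comp1 f g) = ∑ m ∈ Finset.range (d + 1),
      PowerSeries.coeff m f * PowerSeries.coeff d (g ^ m) := by
  rw [comp1, PowerSeries.coeff_mk]

lemma constantCoeff_comp1 (f g : PowerSeries ℚ) :
    PowerSeries.constantCoeff (comp1 f g) = PowerSeries.constantCoeff f := by
  rw [← PowerSeries.coeff_zero_eq_constantCoeff_apply, coeff_comp1]
  simp

lemma comp1_one (g : PowerSeries ℚ) : comp1 1 g = 1 := by
  ext d
  rw [coeff_comp1]
  simp [PowerSeries.coeff_one, ite_mul]

lemma comp1_mul (a b g : PowerSeries ℚ) (hg : PowerSeries.constantCoeff g = 0) :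
    comp1 (a * b) g = comp1 a g * comp1 b g := by
  ext d
  rw [coeff_comp1, PowerSeries.coeff_mul]
  set F : ℕ × ℕ → ℚ := fun x => PowerSeries.coeff x.1 a * PowerSeries.coeff x.2 b *
    PowerSeries.coeff d (g ^ (x.1 + x.2)) with hF
  set sqr := Finset.range (d+1) ×ˢ Finset.range (d+1) with hsqr
  -- RHS equals the sum of `F` over the square
  have hR : ∑ pq ∈ Finset.HasAntidiagonal.antidiagonal d,
      PowerSeries.coeff pq.1 (comp1 a g) * PowerSeries.coeff pq.2 (comp1 b g)
      = ∑ x ∈ sqr, F x := by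
    have step1 : ∀ pq ∈ Finset.HasAntidiagonal.antidiagonal d,
        PowerSeries.coeff pq.1 (comp1 a g) * PowerSeries.coeff pq.2 (comp1 b g)
        = ∑ x ∈ sqr,
            (PowerSeries.coeff x.1 a * PowerSeries.coeff x.2 b) *
            (PowerSeries.coeff pq.1 (g ^ x.1) * PowerSeries.coeff pq.2 (g ^ x.2)) := by
      rintro ⟨p, q⟩ hpq
      rw [Finset.HasAntidiagonal.mem_antidiagonal] at hpq
      have hp : p + 1 ≤ d + 1 := by omega
      have hq : q + 1 ≤ d + 1 := by omega
      rw [coeff_comp1, coeff_comp1]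
      rw [Finset.sum_subset (Finset.range_subset_range.mpr hp)
          (fun x hx hx' => by
            rw [coeff_pow_zero hg (by simp at hx hx' ⊢; omega), mul_zero]),
        Finset.sum_subset (Finset.range_subset_range.mpr hq)
          (fun x hx hx' => by
            rw [coeff_pow_zero hg (by simp at hx hx' ⊢; omega), mul_zero])]
      rw [Finset.sum_mul_sum, hsqr, Finset.sum_product]
      exact Finset.sum_congr rfl fun i _ => Finset.sum_congr rfl fun j _ => by ring
    rw [Finset.sum_congr rfl step1, Finset.sum_comm]
    refine Finset.sum_congr rfl fun x _ => ?_
    rw [← Finset.mul_sum, hF]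
    have : ∑ pq ∈ Finset.HasAntidiagonal.antidiagonal d,
        PowerSeries.coeff pq.1 (g ^ x.1) * PowerSeries.coeff pq.2 (g ^ x.2)
        = PowerSeries.coeff d (g ^ (x.1 + x.2)) := by
      rw [pow_add, PowerSeries.coeff_mul]
    rw [this]
  rw [hR]
  simp only [PowerSeries.coeff_mul]
  -- LHS equals the sum of `F` over the square
  have hAnti : ∀ m ∈ Finset.range (d+1),
      Finset.HasAntidiagonal.antidiagonal m = sqr.filter (fun x => x.1 + x.2 = m) := by
    intro m hm
    rw [Finset.mem_range] at hm
    ext x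
    simp only [Finset.HasAntidiagonal.mem_antidiagonal, Finset.mem_filter, hsqr, Finset.mem_product,
      Finset.mem_range]
    omega
  calc ∑ m ∈ Finset.range (d+1),
        (∑ x ∈ Finset.HasAntidiagonal.antidiagonal m,
          PowerSeries.coeff x.1 a * PowerSeries.coeff x.2 b) *
          PowerSeries.coeff d (g ^ m)
      = ∑ m ∈ Finset.range (d+1), ∑ x ∈ sqr, if x.1 + x.2 = m then F x else 0 := by
        refine Finset.sum_congr rfl fun m hm => ?_
        rw [Finset.sum_mul, hAnti m hm, Finset.sum_filter]
        refine Finset.sum_congr rfl fun x _ => ?_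
        split_ifs with h
        · rw [hF]; simp only [h]
        · rfl
    _ = ∑ x ∈ sqr, ∑ m ∈ Finset.range (d+1), if x.1 + x.2 = m then F x else 0 :=
        Finset.sum_comm
    _ = ∑ x ∈ sqr, F x := by
        refine Finset.sum_congr rfl fun x _ => ?_
        rw [Finset.sum_ite_eq]
        split_ifs with h
        · rfl
        · rw [Finset.mem_range, not_lt] at h
          simp only [hF]
          rw [coeff_pow_zero hg (by omega), mul_zero]

lemma comp1_pow (a g : PowerSeries ℚ) (hg : PowerSeries.constantCoeff g = 0) (j : ℕ) :
    comp1 (a ^ j) g = (comp1 a g) ^ j := by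
  induction j with
  | zero => simpa using comp1_one g
  | succ j ih => rw [pow_succ, comp1_mul _ _ _ hg, ih, pow_succ]

lemma comp1_assoc (f g h : PowerSeries ℚ) (hg : PowerSeries.constantCoeff g = 0)
    (hh : PowerSeries.constantCoeff h = 0) :
    comp1 (comp1 f g) h = comp1 f (comp1 g h) := by
  ext d
  rw [coeff_comp1, coeff_comp1]
  calc ∑ m ∈ Finset.range (d+1), PowerSeries.coeff m (comp1 f g) *
        PowerSeries.coeff d (h ^ m)
      = ∑ m ∈ Finset.Ico 0 (d+1), ∑ j ∈ Finset.Ico 0 (m+1),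
          PowerSeries.coeff j f * PowerSeries.coeff m (g ^ j) *
          PowerSeries.coeff d (h ^ m) := by
        rw [Finset.range_eq_Ico]
        refine Finset.sum_congr rfl fun m _ => ?_
        rw [coeff_comp1, Finset.sum_mul, Finset.range_eq_Ico]
    _ = ∑ j ∈ Finset.Ico 0 (d+1), ∑ m ∈ Finset.Ico j (d+1),
          PowerSeries.coeff j f * PowerSeries.coeff m (g ^ j) *
          PowerSeries.coeff d (h ^ m) := by
        rw [← Finset.sum_Ico_Ico_comm]
    _ = ∑ j ∈ Finset.range (d+1), PowerSeries.coeff j f *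
          PowerSeries.coeff d ((comp1 g h) ^ j) := by
        rw [Finset.range_eq_Ico]
        refine Finset.sum_congr rfl fun j hj => ?_
        rw [Finset.mem_Ico] at hj
        rw [← comp1_pow _ _ hh, coeff_comp1, Finset.mul_sum, Finset.range_eq_Ico]
        rw [← Finset.sum_Ico_consecutive _ (Nat.zero_le j) (by omega : j ≤ d + 1)]
        have hz : ∑ m ∈ Finset.Ico 0 j, PowerSeries.coeff j f *
            (PowerSeries.coeff m (g ^ j) * PowerSeries.coeff d (h ^ m)) = 0 := by
          refine Finset.sum_eq_zero fun m hm => ?_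
          rw [Finset.mem_Ico] at hm
          rw [coeff_pow_zero hg (by omega), zero_mul, mul_zero]
        rw [hz, zero_add]
        exact Finset.sum_congr rfl fun m _ => by ring

/-! ### The log series and its powers -/

lemma coeff_logOnePlus (n : ℕ) :
    PowerSeries.coeff n logOnePlus = if n = 0 then 0 else (-1 : ℚ) ^ (n + 1) / n := by
  rw [logOnePlus, PowerSeries.coeff_mk]

lemma constantCoeff_logOnePlus : PowerSeries.constantCoeff logOnePlus = 0 := by
  rw [← PowerSeries.coeff_zero_eq_constantCoeff_apply, coeff_logOnePlus]; simp

lemma onePlusX_mul_dL :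
    ((1 : ℚ⟦X⟧) + PowerSeries.X) * (PowerSeries.derivative ℚ logOnePlus) = 1 := by
  ext n
  rw [add_mul, one_mul, map_add]
  rcases n with _ | n
  · have h0 : PowerSeries.coeff 0 (PowerSeries.X * PowerSeries.derivative ℚ logOnePlus) = 0 := by
      simp [PowerSeries.coeff_zero_eq_constantCoeff_apply]
    rw [h0, add_zero, PowerSeries.coeff_derivative, coeff_logOnePlus]
    norm_num
  · rw [PowerSeries.coeff_succ_X_mul, PowerSeries.coeff_derivative,
      PowerSeries.coeff_derivative, coeff_logOnePlus, coeff_logOnePlus,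
      PowerSeries.coeff_one]
    have h2 : ((n:ℚ) + 1) ≠ 0 := by positivity
    have h3 : ((n:ℚ) + 2) ≠ 0 := by positivity
    simp only [Nat.succ_ne_zero, if_false, Nat.add_eq, Nat.cast_add, Nat.cast_one]
    push_cast
    field_simp
    ring

lemma deriv_pow_logOnePlus : ∀ m : ℕ,
    ((1 : ℚ⟦X⟧) + PowerSeries.X) * (PowerSeries.derivative ℚ (logOnePlus ^ (m + 1)))
      = PowerSeries.C ((m : ℚ) + 1) * logOnePlus ^ m := by
  intro m
  induction m with
  | zero =>
    rw [pow_one, pow_zero, onePlusX_mul_dL]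
    norm_num
  | succ m ih =>
    have hC : PowerSeries.C (((m:ℚ) + 1) + 1) = PowerSeries.C ((m:ℚ) + 1) + 1 := by
      rw [map_add, map_one]
    rw [pow_succ, Derivation.leibniz, smul_eq_mul, smul_eq_mul]
    push_cast
    rw [hC]
    have expand : ((1 : ℚ⟦X⟧) + PowerSeries.X) *
        (logOnePlus ^ (m+1) * PowerSeries.derivative ℚ logOnePlus
          + logOnePlus * PowerSeries.derivative ℚ (logOnePlus ^ (m+1)))
        = logOnePlus ^ (m+1) * (((1 : ℚ⟦X⟧) + PowerSeries.X) * PowerSeries.derivative ℚ logOnePlus)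
          + logOnePlus * (((1 : ℚ⟦X⟧) + PowerSeries.X) *
              PowerSeries.derivative ℚ (logOnePlus ^ (m+1))) := by ring
    rw [expand, onePlusX_mul_dL, ih, mul_one]
    ring

lemma crec (n m : ℕ) :
    ((n:ℚ) + 1) * PowerSeries.coeff (n+1) (logOnePlus ^ (m+1)) =
      ((m:ℚ) + 1) * PowerSeries.coeff n (logOnePlus ^ m)
        - (n : ℚ) * PowerSeries.coeff n (logOnePlus ^ (m+1)) := by
  have h := congrArg (PowerSeries.coeff n) (deriv_pow_logOnePlus m)
  rw [add_mul, one_mul, map_add, PowerSeries.coeff_C_mul, PowerSeries.coeff_derivative] at h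
  rcases n with _ | k
  · have h0 : PowerSeries.coeff 0
        (PowerSeries.X * PowerSeries.derivative ℚ (logOnePlus ^ (m+1))) = 0 := by
      simp [PowerSeries.coeff_zero_eq_constantCoeff_apply]
    rw [h0, add_zero] at h
    push_cast at h ⊢
    linarith
  · rw [PowerSeries.coeff_succ_X_mul, PowerSeries.coeff_derivative] at h
    push_cast
    push_cast at h
    nlinarith [h]

/-! ### Stirling numbers of the first kind -/

lemma stirS1_zero (m : ℕ) : stirS1 0 m = if m = 0 then 1 else 0 := by
  simp [stirS1, Polynomial.coeff_one]

lemma stirS1_succ_zero (n : ℕ) : stirS1 (n+1) 0 = -(n:ℤ) * stirS1 n 0 := by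
  rw [stirS1, stirS1, Finset.prod_range_succ, mul_sub, Polynomial.coeff_sub,
    Polynomial.coeff_mul_X_zero, Polynomial.coeff_mul_C]
  ring

lemma stirS1_succ_succ (n m : ℕ) :
    stirS1 (n+1) (m+1) = stirS1 n m - (n:ℤ) * stirS1 n (m+1) := by
  rw [stirS1, stirS1, stirS1, Finset.prod_range_succ, mul_sub, Polynomial.coeff_sub,
    Polynomial.coeff_mul_X, Polynomial.coeff_mul_C]
  ring

lemma stirS1_pos_zero : ∀ n : ℕ, stirS1 (n+1) 0 = 0 := by
  intro n
  induction n with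
  | zero => rw [stirS1_succ_zero]; simp
  | succ n ih => rw [stirS1_succ_zero, ih]; ring

lemma key : ∀ n m : ℕ, PowerSeries.coeff n (logOnePlus ^ m)
    = (stirS1 n m : ℚ) * m.factorial / n.factorial := by
  intro n
  induction n with
  | zero =>
    intro m
    rw [PowerSeries.coeff_zero_eq_constantCoeff_apply, map_pow, constantCoeff_logOnePlus,
      stirS1_zero]
    cases m with
    | zero => norm_num
    | succ m => norm_num
  | succ n ih =>
    intro m
    cases m with
    | zero =>
      rw [pow_zero, PowerSeries.coeff_one, stirS1_pos_zero n, if_neg (Nat.succ_ne_zero n)]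
      norm_num
    | succ m =>
      have h := crec n m
      rw [ih m, ih (m+1)] at h
      have hn1 : ((n:ℚ)+1) ≠ 0 := by positivity
      have e : PowerSeries.coeff (n+1) (logOnePlus ^ (m+1))
          = (((m:ℚ)+1) * ((stirS1 n m : ℚ) * m.factorial / n.factorial)
            - (n:ℚ) * ((stirS1 n (m+1) : ℚ) * (m+1).factorial / n.factorial)) / ((n:ℚ)+1) := by
        rw [eq_div_iff hn1]
        linarith [h]
      rw [e, stirS1_succ_succ]
      have hfn : ((n.factorial : ℚ)) ≠ 0 := Nat.cast_ne_zero.mpr n.factorial_ne_zero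
      have hfm : ((m.factorial : ℚ)) ≠ 0 := Nat.cast_ne_zero.mpr m.factorial_ne_zero
      rw [Nat.factorial_succ n, Nat.factorial_succ m]
      push_cast
      field_simp

/-! ### The generating functions -/

lemma tnum_succ (n k r : ℕ) :
    tnum n (k+1) r = ∑ m ∈ Finset.Icc r n, stirS1 n m * tnum m k r := by
  rw [tnum]

lemma tnum_one (n : ℕ) (hn : 1 ≤ n) : tnum n 1 1 = stirS1 n 1 := by
  simp only [tnum]
  rw [Finset.sum_eq_single 1]
  · simp
  · intro m hm hne
    simp [hne]
  · intro h
    exact absurd (Finset.mem_Icc.mpr ⟨le_refl 1, hn⟩) h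

lemma tOneGen_one : tOneGen 1 = 1 + logOnePlus := by
  ext n
  rw [map_add, tOneGen, PowerSeries.coeff_mk]
  cases n with
  | zero => simp [coeff_logOnePlus]
  | succ n =>
    rw [if_neg (Nat.succ_ne_zero n), tnum_one _ (Nat.succ_le_succ (Nat.zero_le n)),
      PowerSeries.coeff_one, if_neg (Nat.succ_ne_zero n), zero_add,
      ← pow_one logOnePlus, key]
    norm_num

lemma tOneGen_step (k : ℕ) :
    tOneGen (k+2) = 1 + comp1 (tOneGen (k+1) - 1) logOnePlus := by
  ext n
  rw [map_add, coeff_comp1]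
  cases n with
  | zero =>
    simp [tOneGen, PowerSeries.coeff_mk, PowerSeries.coeff_one, map_sub,
      PowerSeries.coeff_zero_eq_constantCoeff_apply]
  | succ n =>
    rw [tOneGen, PowerSeries.coeff_mk, if_neg (Nat.succ_ne_zero n),
      PowerSeries.coeff_one, if_neg (Nat.succ_ne_zero n), zero_add]
    have hsub : Finset.Icc 1 (n+1) ⊆ Finset.range (n+2) := by
      intro x hx; rw [Finset.mem_Icc] at hx; rw [Finset.mem_range]; omega
    rw [← Finset.sum_subset hsub (fun x hx hx' => by
      rw [Finset.mem_range] at hx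
      rw [Finset.mem_Icc] at hx'
      have hx0 : x = 0 := by omega
      subst hx0
      rw [map_sub, tOneGen, PowerSeries.coeff_mk, if_pos rfl, PowerSeries.coeff_one,
        if_pos rfl, sub_self, zero_mul])]
    rw [tnum_succ]
    push_cast
    rw [Finset.sum_div]
    refine Finset.sum_congr rfl fun m hm => ?_
    rw [Finset.mem_Icc] at hm
    have hm0 : m ≠ 0 := by omega
    rw [map_sub, tOneGen, PowerSeries.coeff_mk, if_neg hm0, PowerSeries.coeff_one,
      if_neg hm0, sub_zero, key]
    have hfm : ((m.factorial : ℚ)) ≠ 0 := Nat.cast_ne_zero.mpr m.factorial_ne_zero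
    have hfn : (((n+1).factorial : ℚ)) ≠ 0 := Nat.cast_ne_zero.mpr (n+1).factorial_ne_zero
    field_simp

noncomputable def Aseq : ℕ → PowerSeries ℚ
  | 0 => logOnePlus
  | k+1 => comp1 (Aseq k) logOnePlus

lemma constantCoeff_Aseq : ∀ k, PowerSeries.constantCoeff (Aseq k) = 0
  | 0 => constantCoeff_logOnePlus
  | k+1 => by rw [Aseq, constantCoeff_comp1]; exact constantCoeff_Aseq k

lemma claim1 : ∀ k, tOneGen (k+1) = 1 + Aseq k
  | 0 => tOneGen_one
  | k+1 => by
    rw [tOneGen_step k, claim1 k, add_sub_cancel_left, Aseq]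

lemma claim2 : ∀ k, comp1 (Aseq k) logOnePlus = comp1 logOnePlus (Aseq k)
  | 0 => rfl
  | k+1 => by
    have h : Aseq (k+1) = comp1 (Aseq k) logOnePlus := rfl
    rw [h, claim2 k, comp1_assoc _ _ _ (constantCoeff_Aseq k) constantCoeff_logOnePlus,
      ← claim2 k]

end

/-- For every `k ≥ 2`, as formal power series in `ℚ[[x]]`:
`1 + ∑_{n≥1} t(n,k,1) xⁿ/n! = 1 + log(1 + ∑_{n≥1} t(n,k-1,1) xⁿ/n!)`. -/
theorem egf_t_one_log (k : ℕ) (hk : 2 ≤ k) :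
    tOneGen k = 1 + logOf (tOneGen (k - 1)) := by
  obtain ⟨j, rfl⟩ : ∃ j, k = j + 2 := ⟨k - 2, by omega⟩
  have h1 : j + 2 - 1 = j + 1 := rfl
  rw [h1, logOf, claim1 (j+1), claim1 j, add_sub_cancel_left,
    show Aseq (j+1) = comp1 (Aseq j) logOnePlus from rfl, claim2 j]
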